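/- Under the hard-core path setup on the cycle with droplet initial condition c avoiding e₀ = {0,L−1}: every index moving counter-clockwise precedes every index that does not move counter-clockwise, i.e., sup I_-^u ≤ inf(I_0^u ∪ I_+^u), and similarly sup(I_-^u ∪ I_0^u) ≤ inf I_+^u (with conventions inf ∅ = ∞, sup ∅ = −∞). -/

import Mathlib

open Finset
open scoped Classical
open Fin.NatCast

noncomputable section
set_option linter.unusedSectionVars false
set_option maxHeartbeats 1000000

/-- Distance on the cycle `ℤ/L`. -/
def cycDist {L : ℕ} (a b : Fin L) : ℕ := min (a - b).val (b - a).val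

/-- Hard-core configuration graph: an edge moves one particle to a free neighbouring site. -/
def hcGraph (L : ℕ) [NeZero L] : SimpleGraph (Finset (Fin L)) where
  Adj x y := x.card = y.card ∧ ∃ j : Fin L, symmDiff x y = {j, j + ((1 : ℕ) : Fin L)}
  symm := by
    constructor
    rintro x y ⟨h1, j, h2⟩
    refine ⟨h1.symm, j, ?_⟩
    rw [symmDiff_comm]
    exact h2
  loopless := by
    constructor
    rintro x ⟨-, j, h2⟩
    have hj : j ∈ symmDiff x x := by rw [h2]; simp
    rw [symmDiff_self] at hj
    simp at hj

/-- Graph distance `d_L^N` on the hard-core configuration graph. -/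
def dN (L : ℕ) [NeZero L] (x y : Finset (Fin L)) : ℕ := (hcGraph L).dist x y

/-- The droplet (cluster of `N` consecutive sites) centred at `m`. -/
def droplet (L N : ℕ) [NeZero L] (m : Fin L) : Finset (Fin L) :=
  (Finset.range N).image fun i => m - (((N - 1) / 2 : ℕ) : Fin L) + (i : Fin L)

def isDroplet (L N : ℕ) [NeZero L] (c : Finset (Fin L)) : Prop := ∃ m : Fin L, c = droplet L N m

/-- Distance to the set of droplet configurations. -/
def distDrop (L N : ℕ) [NeZero L] (x : Finset (Fin L)) : ℕ :=
  sInf (Set.range fun m : Fin L => dN L x (droplet L N m))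

/-- Centres of droplets closest to `x`. -/
def WL (L N : ℕ) [NeZero L] (x : Finset (Fin L)) : Set (Fin L) :=
  {m : Fin L | dN L x (droplet L N m) = distDrop L N x}

/-- A path of length `k` from `x` to `y` in the configuration graph. -/
def IsPathN (L : ℕ) [NeZero L] (u : ℕ → Finset (Fin L)) (k : ℕ) (x y : Finset (Fin L)) : Prop :=
  u 0 = x ∧ u k = y ∧ ∀ l < k, (hcGraph L).Adj (u l) (u (l + 1))

/-- The particle-tracking of a path: the labelled positions `ũ`. -/
def IsTracking (L N : ℕ) [NeZero L] (u : ℕ → Finset (Fin L)) (k : ℕ) (ut : ℕ → Fin N → Fin L) : Prop :=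
  StrictMono (ut 0) ∧
  (∀ l ≤ k, u l = Finset.image (ut l) Finset.univ) ∧
  ∀ l < k, ∀ j : Fin N, (ut l j ∈ u (l + 1) → ut (l + 1) j = ut l j) ∧
    (ut l j ∉ u (l + 1) → ut (l + 1) j ∈ u (l + 1) \ u l)

/-- `L_j^u` : distance travelled by particle `j` along the tracked path. -/
def travel {L N : ℕ} (ut : ℕ → Fin N → Fin L) (k : ℕ) (j : Fin N) : ℕ :=
  ∑ l ∈ Finset.range k, cycDist (ut l j) (ut (l + 1) j)

/-- `I_-^u` : particles moving counter-clockwise. -/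
def Iminus {L N : ℕ} [NeZero L] (ut : ℕ → Fin N → Fin L) (k : ℕ) (j : Fin N) : Prop :=
  travel ut k j ≠ 0 ∧ ∃ l ≤ k, ut l j = ut 0 j - ((1 : ℕ) : Fin L)

/-- `I_+^u` : particles moving clockwise. -/
def Iplus {L N : ℕ} [NeZero L] (ut : ℕ → Fin N → Fin L) (k : ℕ) (j : Fin N) : Prop :=
  travel ut k j ≠ 0 ∧ ∃ l ≤ k, ut l j = ut 0 j + ((1 : ℕ) : Fin L)

/-- `I_0^u` : particles that do not move. -/
def I0 {L N : ℕ} (ut : ℕ → Fin N → Fin L) (k : ℕ) (j : Fin N) : Prop := travel ut k j = 0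

/-- The midpoint `M = ⌊(L-1)/2⌋` of the cycle. -/
def midL (L : ℕ) [NeZero L] : Fin L := (((L - 1) / 2 : ℕ) : Fin L)

/-- The sector of size `θ` around `m`, as a set. -/
def sector (L : ℕ) [NeZero L] (m : Fin L) (θ : ℝ) : Set (Fin L) :=
  {k : Fin L | (cycDist k m : ℝ) < θ * L}

/-- The sector of size `θ` around `m`, as a finset. -/
def secF (L : ℕ) [NeZero L] (m : Fin L) (θ : ℝ) : Finset (Fin L) :=
  Finset.univ.filter fun k => (cycDist k m : ℝ) < θ * L

section Aux
open Fin.CommRing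


variable {L : ℕ} [NeZero L]

/-- the ± sequence: `a + t` or `a - t`. -/
def finSeq {L : ℕ} [NeZero L] (a : Fin L) (e : Bool) (t : ℕ) : Fin L :=
  if e then a + (t : Fin L) else a - (t : Fin L)

section basics

lemma fin_sub_val (a b : Fin L) :
    (a - b).val = if b.val ≤ a.val then a.val - b.val else a.val + L - b.val := by
  rcases a with ⟨a, ha⟩; rcases b with ⟨b, hb⟩
  rw [Fin.sub_def]
  simp only
  split
  · have h1 : L - b + a = (a - b) + L := by omega
    rw [h1, Nat.add_mod_right, Nat.mod_eq_of_lt (by omega)]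
  · rw [Nat.mod_eq_of_lt (by omega)]; omega

lemma fin_add_val (a b : Fin L) :
    (a + b).val = if a.val + b.val < L then a.val + b.val else a.val + b.val - L := by
  rcases a with ⟨a, ha⟩; rcases b with ⟨b, hb⟩
  rw [Fin.add_def]
  simp only
  split
  · rw [Nat.mod_eq_of_lt (by omega)]
  · have h1 : a + b = (a + b - L) + L := by omega
    rw [h1, Nat.add_mod_right, Nat.mod_eq_of_lt (by omega)]; omega

lemma cycDist_val (a b : Fin L) :
    cycDist a b = min ((if b.val ≤ a.val then a.val - b.val else a.val + L - b.val))
      ((if a.val ≤ b.val then b.val - a.val else b.val + L - a.val)) := by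
  rw [cycDist, fin_sub_val, fin_sub_val]

lemma cycDist_comm (a b : Fin L) : cycDist a b = cycDist b a := by
  rw [cycDist_val, cycDist_val]; split_ifs <;> omega

lemma cycDist_eq_zero {a b : Fin L} (h : cycDist a b = 0) : a = b := by
  have ha := a.isLt; have hb := b.isLt
  rw [cycDist_val] at h
  refine Fin.ext ?_
  split_ifs at h <;> omega

lemma cycDist_self (a : Fin L) : cycDist a a = 0 := by
  rw [cycDist_val]; split_ifs <;> omega

lemma cycDist_triangle (a b c : Fin L) : cycDist a c ≤ cycDist a b + cycDist b c := by
  have ha := a.isLt; have hb := b.isLt; have hc := c.isLt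
  rw [cycDist_val, cycDist_val, cycDist_val]; split_ifs <;> omega

lemma cycDist_lt (a b : Fin L) : cycDist a b < L := by
  have ha := a.isLt; have hb := b.isLt
  rw [cycDist_val]; split_ifs <;> omega

lemma fin_natCast_val (t : ℕ) (h : t < L) : ((t : Fin L)).val = t := by
  rw [Fin.val_natCast, Nat.mod_eq_of_lt h]

lemma fin_one_val (hL : 2 ≤ L) : (1 : Fin L).val = 1 := by
  have : ((1:ℕ) : Fin L).val = 1 := fin_natCast_val 1 (by omega)
  simpa using this

lemma cycDist_add_one (a : Fin L) (hL : 2 ≤ L) : cycDist a (a + 1) = 1 := by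
  have h1 := fin_one_val (L := L) hL
  have ha := a.isLt
  have h2 := fin_add_val a 1
  rw [cycDist_val, h2, h1]; split_ifs <;> omega

lemma cycDist_sub_one (a : Fin L) (hL : 2 ≤ L) : cycDist a (a - 1) = 1 := by
  have h1 := fin_one_val (L := L) hL
  have ha := a.isLt
  have h2 := fin_sub_val a 1
  rw [cycDist_val, h2, h1]; split_ifs <;> omega

lemma cycDist_add_cast_le (a : Fin L) (s : ℕ) : cycDist a (a + (s : Fin L)) ≤ s := by
  have h : (a + (s:Fin L) - a) = (s : Fin L) := by ring
  calc cycDist a (a + (s:Fin L)) ≤ (a + (s:Fin L) - a).val := by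
        rw [cycDist]; exact min_le_right _ _
    _ = (s : Fin L).val := by rw [h]
    _ ≤ s := by rw [Fin.val_natCast]; exact Nat.mod_le _ _

lemma cycDist_sub_cast_le (a : Fin L) (s : ℕ) : cycDist a (a - (s : Fin L)) ≤ s := by
  have h : (a - (a - (s:Fin L))) = (s : Fin L) := by ring
  calc cycDist a (a - (s:Fin L)) ≤ (a - (a - (s:Fin L))).val := by
        rw [cycDist]; exact min_le_left _ _
    _ ≤ s := by rw [h, Fin.val_natCast]; exact Nat.mod_le _ _

lemma cycDist_rep (a b : Fin L) :
    b = finSeq a true (cycDist a b) ∨ b = finSeq a false (cycDist a b) := by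
  rcases le_or_gt ((b - a).val) ((a - b).val) with h | h
  · left
    have h1 : cycDist a b = (b - a).val := by rw [cycDist]; omega
    rw [finSeq, if_pos rfl, h1, Fin.cast_val_eq_self]; ring
  · right
    have h1 : cycDist a b = (a - b).val := by rw [cycDist]; omega
    rw [finSeq, if_neg (by simp), h1, Fin.cast_val_eq_self]; ring

end basics

section finSeqLemmas

lemma finSeq_true (a : Fin L) (t : ℕ) : finSeq a true t = a + (t : Fin L) := by simp [finSeq]

lemma finSeq_false (a : Fin L) (t : ℕ) : finSeq a false t = a - (t : Fin L) := by simp [finSeq]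

lemma finSeq_zero (a : Fin L) (e : Bool) : finSeq a e 0 = a := by
  cases e <;> simp [finSeq]

lemma finSeq_le (a : Fin L) (e : Bool) {s t : ℕ} (hst : s ≤ t) :
    cycDist (finSeq a e s) (finSeq a e t) ≤ t - s := by
  have hcast : ((t : ℕ) : Fin L) = ((s : ℕ) : Fin L) + (((t - s : ℕ)) : Fin L) := by
    rw [← Nat.cast_add]; congr 1; omega
  cases e
  · have h2 : finSeq a false t = finSeq a false s - ((t - s : ℕ) : Fin L) := by
      rw [finSeq_false, finSeq_false, hcast]; ring
    rw [h2]; exact cycDist_sub_cast_le _ _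
  · have h2 : finSeq a true t = finSeq a true s + ((t - s : ℕ) : Fin L) := by
      rw [finSeq_true, finSeq_true, hcast]; ring
    rw [h2]; exact cycDist_add_cast_le _ _

lemma finSeq_inj (a : Fin L) (e : Bool) {s t : ℕ} (hs : s < L) (ht : t < L)
    (h : finSeq a e s = finSeq a e t) : s = t := by
  have hcast : ((s : ℕ) : Fin L) = ((t : ℕ) : Fin L) := by
    cases e
    · rw [finSeq_false, finSeq_false] at h
      exact sub_right_inj.mp h
    · rw [finSeq_true, finSeq_true] at h
      exact add_left_cancel h
  have := congrArg Fin.val hcast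
  rwa [fin_natCast_val s hs, fin_natCast_val t ht] at this

lemma finSeq_succ_true (a : Fin L) (t : ℕ) : finSeq a true (t + 1) = finSeq a true t + 1 := by
  rw [finSeq_true, finSeq_true, Nat.cast_add, Nat.cast_one]; ring

lemma finSeq_succ_false (a : Fin L) (t : ℕ) : finSeq a false t = finSeq a false (t + 1) + 1 := by
  rw [finSeq_false, finSeq_false, Nat.cast_add, Nat.cast_one]; ring

end finSeqLemmas

section helpers

lemma sum_two_change {n : ℕ} (f g : Fin n → ℕ) (i j : Fin n) (hij : i ≠ j) (c : ℕ)
    (hsame : ∀ l, l ≠ i → l ≠ j → g l = f l) (hb : g i + g j + c ≤ f i + f j) :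
    (∑ l, g l) + c ≤ ∑ l, f l := by
  classical
  have hj : j ∈ (univ : Finset (Fin n)).erase i := by
    simp [Finset.mem_erase, hij.symm]
  have key : ∀ h : Fin n → ℕ,
      ∑ l, h l = h i + (h j + ∑ l ∈ ((univ : Finset (Fin n)).erase i).erase j, h l) := by
    intro h
    rw [Finset.add_sum_erase _ h hj, Finset.add_sum_erase _ h (mem_univ i)]
  rw [key f, key g]
  have hrest : ∑ l ∈ ((univ : Finset (Fin n)).erase i).erase j, g l
      = ∑ l ∈ ((univ : Finset (Fin n)).erase i).erase j, f l := by
    refine Finset.sum_congr rfl fun l hl => ?_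
    simp only [Finset.mem_erase] at hl
    exact hsame l hl.2.1 hl.1
  omega

lemma sum_one_change {n : ℕ} (f g : Fin n → ℕ) (i : Fin n) (c : ℕ)
    (hsame : ∀ l, l ≠ i → g l = f l) (hb : g i + c ≤ f i) :
    (∑ l, g l) + c ≤ ∑ l, f l := by
  classical
  have key : ∀ h : Fin n → ℕ,
      ∑ l, h l = h i + ∑ l ∈ (univ : Finset (Fin n)).erase i, h l := by
    intro h
    rw [Finset.add_sum_erase _ h (mem_univ i)]
  rw [key f, key g]
  have hrest : ∑ l ∈ (univ : Finset (Fin n)).erase i, g l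
      = ∑ l ∈ (univ : Finset (Fin n)).erase i, f l := by
    refine Finset.sum_congr rfl fun l hl => ?_
    simp only [Finset.mem_erase] at hl
    exact hsame l hl.1
  omega

lemma image_comp_swap {n : ℕ} {α : Type*} [DecidableEq α] (y : Fin n → α) (a b : Fin n) :
    image (y ∘ Equiv.swap a b) univ = image y univ := by
  rw [← Finset.image_image]
  congr 1
  exact Finset.image_univ_equiv (Equiv.swap a b)

lemma image_update {n : ℕ} (x : Fin n → Fin L) (hx : Function.Injective x) (i : Fin n)
    (v : Fin L) :
    image (Function.update x i v) univ = insert v ((image x univ).erase (x i)) := by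
  classical
  ext z
  simp only [mem_image, mem_univ, true_and, mem_insert, mem_erase]
  constructor
  · rintro ⟨j, hj⟩
    by_cases hji : j = i
    · subst hji; rw [Function.update_self] at hj; exact Or.inl hj.symm
    · rw [Function.update_of_ne hji] at hj
      refine Or.inr ⟨?_, ⟨j, hj⟩⟩
      rintro rfl
      exact hji (hx hj)
  · rintro (rfl | ⟨hz, j, hj⟩)
    · exact ⟨i, Function.update_self _ _ _⟩
    · have hji : j ≠ i := by rintro rfl; exact hz hj.symm
      exact ⟨j, by rw [Function.update_of_ne hji]; exact hj⟩

lemma symmDiff_insert_erase {X : Finset (Fin L)} {v w : Fin L} (hw : w ∈ X) (hv : v ∉ X) :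
    symmDiff X (insert v (X.erase w)) = {w, v} := by
  classical
  ext z
  rw [Finset.mem_symmDiff]
  simp only [mem_insert, mem_erase, mem_insert, Finset.mem_singleton]
  constructor
  · rintro (⟨h1, h2⟩ | ⟨h1, h2⟩)
    · by_cases hzv : z = v
      · exact Or.inr hzv
      · left
        by_contra hzw
        exact h2 (Or.inr ⟨hzw, h1⟩)
    · rcases h1 with rfl | ⟨hzw, hzx⟩
      · exact Or.inr rfl
      · exact (h2 hzx).elim
  · rintro (rfl | rfl)
    · left
      refine ⟨hw, ?_⟩
      rintro (rfl | ⟨h1, h2⟩)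
      · exact hv hw
      · exact h1 rfl
    · right
      exact ⟨Or.inl rfl, hv⟩

end helpers

section Ulemma

lemma update_injective {n : ℕ} {x : Fin n → Fin L} (hx : Function.Injective x) {i : Fin n}
    {v : Fin L} (hv : v ∉ image x univ) : Function.Injective (Function.update x i v) := by
  classical
  intro s t hst
  by_cases hs : s = i <;> by_cases ht : t = i
  · rw [hs, ht]
  · subst hs
    rw [Function.update_self, Function.update_of_ne ht] at hst
    exact absurd (mem_image_of_mem x (mem_univ t)) (hst ▸ hv)
  · subst ht
    rw [Function.update_self, Function.update_of_ne hs] at hst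
    exact absurd (mem_image_of_mem x (mem_univ s)) (hst.symm ▸ hv)
  · rw [Function.update_of_ne hs, Function.update_of_ne ht] at hst
    exact hx hst

lemma walk_of_sum_zero {N : ℕ} (x y : Fin N → Fin L)
    (h : ∑ j, cycDist (x j) (y j) = 0) :
    ∃ w : (hcGraph L).Walk (image x univ) (image y univ),
      w.length ≤ ∑ j, cycDist (x j) (y j) := by
  have hxy : x = y := by
    funext j
    exact cycDist_eq_zero ((Finset.sum_eq_zero_iff).mp h j (mem_univ j))
  subst hxy
  exact ⟨SimpleGraph.Walk.nil, by simp⟩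

lemma exists_walk_le {N : ℕ} (hNL : N < L) :
    ∀ (M : ℕ) (x y : Fin N → Fin L), Function.Injective x → Function.Injective y →
      (∑ j, cycDist (x j) (y j)) * (N + 1)
        + (univ.filter fun j => x j ≠ y j).card ≤ M →
      ∃ w : (hcGraph L).Walk (image x univ) (image y univ),
        w.length ≤ ∑ j, cycDist (x j) (y j) := by
  intro M
  induction M with
  | zero =>
    intro x y hx hy hM
    have h1 : (∑ j, cycDist (x j) (y j)) * (N + 1) = 0 := by omega
    have h2 : (∑ j, cycDist (x j) (y j)) = 0 := by
      rcases Nat.mul_eq_zero.mp h1 with h | h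
      · exact h
      · omega
    exact walk_of_sum_zero x y h2
  | succ M IH =>
    intro x y hx hy hM
    by_cases h0 : (∑ j, cycDist (x j) (y j)) = 0
    · exact walk_of_sum_zero x y h0
    obtain ⟨j₀, -, hj₀⟩ := Finset.exists_ne_zero_of_sum_ne_zero h0
    obtain ⟨D, hDdef⟩ : ∃ D, D = cycDist (x j₀) (y j₀) := ⟨_, rfl⟩
    have hD1 : 1 ≤ D := by rw [hDdef]; exact Nat.one_le_iff_ne_zero.mpr hj₀
    have hDL : D < L := by rw [hDdef]; exact cycDist_lt _ _
    obtain ⟨e, he⟩ : ∃ e, y j₀ = finSeq (x j₀) e D := by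
      rcases cycDist_rep (x j₀) (y j₀) with h | h
      · exact ⟨true, by rw [hDdef]; exact h⟩
      · exact ⟨false, by rw [hDdef]; exact h⟩
    set p := finSeq (x j₀) e with hpdef
    have hp0 : p 0 = x j₀ := finSeq_zero _ _
    have hxj₀y : x j₀ ≠ y j₀ := by
      intro hcon
      rw [hDdef, hcon, cycDist_self] at hD1
      omega
    have hcardx : (image x univ).card = N := by
      rw [Finset.card_image_of_injective _ hx, card_univ, Fintype.card_fin]
    have hfsL : p L = x j₀ := by
      cases e <;> rw [hpdef] <;>
        simp [finSeq_true, finSeq_false, Fin.natCast_self]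
    have hex0 : ∃ t, t < L ∧ p (t + 1) ∉ image x univ := by
      by_contra hall
      push_neg at hall
      have hmaps : ∀ s : Fin L, p s.val ∈ image x univ := by
        intro s
        rcases Nat.eq_zero_or_pos s.val with hs | hs
        · rw [hs, hp0]; exact mem_image_of_mem x (mem_univ j₀)
        · have h1 : s.val = (s.val - 1) + 1 := by omega
          rw [h1]; exact hall _ (by omega)
      have hinj : Set.InjOn (fun s : Fin L => p s.val) (univ : Finset (Fin L)) := by
        intro s hs t ht hst
        exact Fin.ext (finSeq_inj _ _ s.isLt t.isLt hst)
      have := Finset.card_le_card_of_injOn _ (fun s _ => hmaps s) hinj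
      simp only [card_univ, Fintype.card_fin, hcardx] at this
      omega
    have hex : ∃ t, p (t + 1) ∉ image x univ := by
      obtain ⟨t, -, ht⟩ := hex0
      exact ⟨t, ht⟩
    set m := Nat.find hex with hmdef
    have hm : p (m + 1) ∉ image x univ := Nat.find_spec hex
    have hmin : ∀ t, t < m → p (t + 1) ∈ image x univ := by
      intro t ht
      by_contra hc
      have h2 : m ≤ t := Nat.find_le hc
      omega
    have hmL : m + 1 < L := by
      obtain ⟨t0, ht0L, ht0⟩ := hex0
      have h1 : m ≤ t0 := Nat.find_le ht0
      rcases Nat.lt_or_ge (m+1) L with h | h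
      · exact h
      · have hmL' : m + 1 = L := by omega
        rw [hmL', hfsL] at hm
        exact absurd (mem_image_of_mem x (mem_univ j₀)) hm
    have hpm_mem : p m ∈ image x univ := by
      rcases Nat.eq_zero_or_pos m with h | h
      · rw [h, hp0]; exact mem_image_of_mem x (mem_univ j₀)
      · have h1 : m = (m - 1) + 1 := by omega
        rw [h1]; exact hmin _ (by omega)
    obtain ⟨jm, -, hxjm⟩ := Finset.mem_image.mp hpm_mem
    have hxj₀pD : cycDist (x j₀) (p D) = D := by rw [← he]; exact hDdef.symm
    have hact : (univ.filter fun j => x j ≠ y j).card ≤ N := by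
      calc (univ.filter fun j => x j ≠ y j).card ≤ (univ : Finset (Fin N)).card :=
            Finset.card_filter_le _ _
        _ = N := by rw [card_univ, Fintype.card_fin]
    rcases Nat.lt_or_ge m D with hcase | hcase
    · -- m < D : rematch j₀ ↔ jm and move the particle at p m to p (m+1)
      set x' := Function.update x jm (p (m + 1)) with hx'def
      set y' := y ∘ Equiv.swap j₀ jm with hy'def
      have hx' : Function.Injective x' := update_injective hx hm
      have hy' : Function.Injective y' := hy.comp (Equiv.swap j₀ jm).injective
      have himy' : image y' univ = image y univ := image_comp_swap y j₀ jm
      have himx' : image x' univ = insert (p (m+1)) ((image x univ).erase (p m)) := by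
        rw [hx'def, image_update x hx jm (p (m+1)), hxjm]
      have hadj : (hcGraph L).Adj (image x univ) (image x' univ) := by
        constructor
        · rw [hcardx, Finset.card_image_of_injective _ hx', card_univ, Fintype.card_fin]
        · rw [himx', symmDiff_insert_erase hpm_mem hm]
          cases e
          · refine ⟨p (m+1), ?_⟩
            rw [Nat.cast_one]
            rw [hpdef, Finset.pair_comm]
            rw [← finSeq_succ_false (x j₀) m]
          · refine ⟨p m, ?_⟩
            rw [Nat.cast_one]
            rw [hpdef, ← finSeq_succ_true (x j₀) m]
      have hsum : (∑ j, cycDist (x' j) (y' j)) + 1 ≤ ∑ j, cycDist (x j) (y j) := by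
        by_cases hjj : j₀ = jm
        · refine sum_one_change (fun j => cycDist (x j) (y j))
            (fun j => cycDist (x' j) (y' j)) j₀ 1 ?_ ?_
          · intro l hl
            have hljm : l ≠ jm := hjj ▸ hl
            rw [hx'def, Function.update_of_ne hljm, hy'def]
            simp only [Function.comp_apply,
              Equiv.swap_apply_of_ne_of_ne hl hljm]
          · have h1 : x' j₀ = p (m+1) := by
              rw [hx'def, hjj, Function.update_self]
            have h2 : y' j₀ = y j₀ := by
              rw [hy'def]; simp only [Function.comp_apply, ← hjj, Equiv.swap_self,
                Equiv.refl_apply]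
            rw [h1, h2, he]
            have h3 : cycDist (p (m+1)) (p D) ≤ D - (m+1) := finSeq_le _ _ (by omega)
            omega
        · refine sum_two_change (fun j => cycDist (x j) (y j))
            (fun j => cycDist (x' j) (y' j)) jm j₀ (Ne.symm hjj) 1 ?_ ?_
          · intro l hl1 hl2
            rw [hx'def, Function.update_of_ne hl1, hy'def]
            simp only [Function.comp_apply, Equiv.swap_apply_of_ne_of_ne hl2 hl1]
          · have h1 : x' jm = p (m+1) := by rw [hx'def, Function.update_self]
            have h2 : y' jm = y j₀ := by
              rw [hy'def]; simp only [Function.comp_apply, Equiv.swap_apply_right]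
            have h3 : x' j₀ = x j₀ := by
              rw [hx'def, Function.update_of_ne hjj]
            have h4 : y' j₀ = y jm := by
              rw [hy'def]; simp only [Function.comp_apply, Equiv.swap_apply_left]
            rw [h1, h2, h3, h4, he, hxjm]
            have h5 : cycDist (p (m+1)) (p D) ≤ D - (m+1) := finSeq_le _ _ (by omega)
            have h6 : cycDist (x j₀) (y jm) ≤ cycDist (x j₀) (p m) + cycDist (p m) (y jm) :=
              cycDist_triangle _ _ _
            have h7 : cycDist (x j₀) (p m) ≤ m := by
              have := finSeq_le (x j₀) e (Nat.zero_le m)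
              rw [finSeq_zero] at this
              simpa using this
            omega
      have hmeas : (∑ j, cycDist (x' j) (y' j)) * (N + 1)
          + (univ.filter fun j => x' j ≠ y' j).card ≤ M := by
        have hact' : (univ.filter fun j => x' j ≠ y' j).card ≤ N := by
          calc (univ.filter fun j => x' j ≠ y' j).card ≤ (univ : Finset (Fin N)).card :=
                Finset.card_filter_le _ _
            _ = N := by rw [card_univ, Fintype.card_fin]
        have hs2 : ((∑ j, cycDist (x' j) (y' j)) + 1) * (N + 1)
            ≤ (∑ j, cycDist (x j) (y j)) * (N + 1) := Nat.mul_le_mul_right _ hsum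
        rw [add_mul, one_mul] at hs2
        omega
      obtain ⟨w', hw'⟩ := IH x' y' hx' hy' hmeas
      refine ⟨SimpleGraph.Walk.cons hadj (w'.copy rfl himy'), ?_⟩
      rw [SimpleGraph.Walk.length_cons, SimpleGraph.Walk.length_copy]
      omega
    · -- D ≤ m : rematch j₀ ↔ jD, strictly decreasing the number of active particles
      have hpD_mem : p D ∈ image x univ := by
        have h1 : D = (D - 1) + 1 := by omega
        rw [h1]; exact hmin _ (by omega)
      obtain ⟨jD, -, hxjD⟩ := Finset.mem_image.mp hpD_mem
      have hne : j₀ ≠ jD := by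
        intro hcon
        have h1 : p 0 = p D := by rw [hp0, hcon, hxjD]
        have := finSeq_inj (x j₀) e (show 0 < L by omega) hDL h1
        omega
      set y' := y ∘ Equiv.swap j₀ jD with hy'def
      have hy' : Function.Injective y' := hy.comp (Equiv.swap j₀ jD).injective
      have himy' : image y' univ = image y univ := image_comp_swap y j₀ jD
      have hy'j₀ : y' j₀ = y jD := by
        rw [hy'def]; simp only [Function.comp_apply, Equiv.swap_apply_left]
      have hy'jD : y' jD = y j₀ := by
        rw [hy'def]; simp only [Function.comp_apply, Equiv.swap_apply_right]
      have hy'other : ∀ l, l ≠ j₀ → l ≠ jD → y' l = y l := by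
        intro l h1 h2
        rw [hy'def]; simp only [Function.comp_apply, Equiv.swap_apply_of_ne_of_ne h1 h2]
      have hsum : (∑ j, cycDist (x j) (y' j)) + 0 ≤ ∑ j, cycDist (x j) (y j) := by
        refine sum_two_change (fun j => cycDist (x j) (y j))
          (fun j => cycDist (x j) (y' j)) jD j₀ (Ne.symm hne) 0 ?_ ?_
        · intro l h1 h2
          rw [hy'other l h2 h1]
        · rw [hy'jD, hy'j₀, he, hxjD]
          have h1 : cycDist (p D) (p D) = 0 := cycDist_self _
          have h2 : cycDist (x j₀) (y jD) ≤ cycDist (x j₀) (p D) + cycDist (p D) (y jD) :=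
            cycDist_triangle _ _ _
          omega
      have hjD_old : x jD ≠ y jD := by
        rw [hxjD]
        intro hcon
        exact hne (hy (he.trans hcon))
      have hjD_mem : jD ∈ univ.filter (fun j => x j ≠ y j) := by
        simp only [mem_filter, mem_univ, true_and]
        exact hjD_old
      have hsub : (univ.filter fun j => x j ≠ y' j)
          ⊆ (univ.filter fun j => x j ≠ y j).erase jD := by
        intro l hl
        simp only [mem_filter, mem_univ, true_and] at hl
        have hljD : l ≠ jD := by
          rintro rfl
          exact hl (by rw [hy'jD, hxjD]; exact he.symm)
        simp only [mem_erase, mem_filter, mem_univ, true_and]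
        refine ⟨hljD, ?_⟩
        by_cases hlj0 : l = j₀
        · subst hlj0; exact hxj₀y
        · rw [← hy'other l hlj0 hljD]; exact hl
      have hactlt : (univ.filter fun j => x j ≠ y' j).card
          < (univ.filter fun j => x j ≠ y j).card :=
        lt_of_le_of_lt (Finset.card_le_card hsub) (Finset.card_erase_lt_of_mem hjD_mem)
      have hmeas : (∑ j, cycDist (x j) (y' j)) * (N + 1)
          + (univ.filter fun j => x j ≠ y' j).card ≤ M := by
        have hs1 : (∑ j, cycDist (x j) (y' j)) ≤ ∑ j, cycDist (x j) (y j) := by omega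
        have hs2 := Nat.mul_le_mul_right (N+1) hs1
        omega
      obtain ⟨w', hw'⟩ := IH x y' hx hy' hmeas
      refine ⟨w'.copy rfl himy', ?_⟩
      rw [SimpleGraph.Walk.length_copy]
      omega

end Ulemma


section PathMachinery

variable {N : ℕ} {c x : Finset (Fin L)} {k : ℕ} {u : ℕ → Finset (Fin L)}
  {ut : ℕ → Fin N → Fin L}

lemma sub_add_one_ne (a : Fin L) (hL : 3 ≤ L) : a + 1 ≠ a - 1 := by
  have h1 := fin_one_val (L := L) (by omega)
  have h2 := fin_add_val a 1
  have h3 := fin_sub_val a 1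
  have ha := a.isLt
  intro hcon
  rw [Fin.ext_iff, h2, h3, h1] at hcon
  split_ifs at hcon <;> omega

lemma card_u (hc : c.card = N) (hpath : IsPathN L u k c x) : ∀ l ≤ k, (u l).card = N := by
  intro l
  induction l with
  | zero => intro _; rw [hpath.1]; exact hc
  | succ l ih =>
    intro hl
    have h1 := (hpath.2.2 l (by omega)).1
    rw [← h1]
    exact ih (by omega)

lemma inj_ut (hc : c.card = N) (hpath : IsPathN L u k c x)
    (htr : IsTracking L N u k ut) : ∀ l ≤ k, Function.Injective (ut l) := by
  intro l hl
  have h1 : (Finset.image (ut l) Finset.univ).card = (univ : Finset (Fin N)).card := by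
    rw [← htr.2.1 l hl, card_u hc hpath l hl, card_univ, Fintype.card_fin]
  have h2 := Finset.card_image_iff.mp h1
  rw [Finset.coe_univ] at h2
  exact fun a b hab => h2 (Set.mem_univ a) (Set.mem_univ b) hab

lemma ut_mem (htr : IsTracking L N u k ut) {l : ℕ} (hl : l ≤ k) (j : Fin N) :
    ut l j ∈ u l := by
  rw [htr.2.1 l hl]
  exact mem_image_of_mem _ (mem_univ j)

/-- Single-step analysis: exactly one particle moves, by one site. -/
lemma step_lemma (hL : 2 ≤ L) (hc : c.card = N) (hpath : IsPathN L u k c x)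
    (htr : IsTracking L N u k ut) :
    ∀ l < k, ∃ jm : Fin N, (∀ j, j ≠ jm → ut (l+1) j = ut l j) ∧
      (ut (l+1) jm = ut l jm + 1 ∨ ut (l+1) jm = ut l jm - 1) ∧
      ut l jm ∉ u (l+1) ∧ ut (l+1) jm ∉ u l ∧ ut (l+1) jm ≠ ut l jm := by
  intro l hl
  obtain ⟨hcadj, q, hsd⟩ := hpath.2.2 l hl
  rw [Nat.cast_one] at hsd
  have hq : q ≠ q + 1 := by
    intro hcon
    have := congrArg Fin.val hcon
    rw [fin_add_val, fin_one_val hL] at this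
    have hqlt := q.isLt
    split_ifs at this <;> omega
  have hcard1 : (u l).card = N := card_u hc hpath l (by omega)
  have hcard2 : (u (l+1)).card = N := card_u hc hpath (l+1) (by omega)
  set A := u l \ u (l+1) with hA
  set B := u (l+1) \ u l with hB
  have hdisj : Disjoint A B := disjoint_sdiff_sdiff
  have hunion : A ∪ B = ({q, q + 1} : Finset (Fin L)) := by
    rw [hA, hB]
    rw [show u l \ u (l+1) ∪ u (l+1) \ u l = symmDiff (u l) (u (l+1)) from rfl, hsd]
  have hcAB : A.card = B.card := by
    have h1 : A.card + (u l ∩ u (l+1)).card = N := by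
      rw [hA, Finset.card_sdiff_add_card_inter, hcard1]
    have h2 : B.card + (u (l+1) ∩ u l).card = N := by
      rw [hB, Finset.card_sdiff_add_card_inter, hcard2]
    rw [Finset.inter_comm] at h2
    omega
  have hcU : A.card + B.card = 2 := by
    rw [← Finset.card_union_of_disjoint hdisj, hunion, Finset.card_pair hq]
  have hcA : A.card = 1 := by omega
  have hcB : B.card = 1 := by omega
  obtain ⟨q₁, hq₁⟩ := Finset.card_eq_one.mp hcA
  obtain ⟨q₂, hq₂⟩ := Finset.card_eq_one.mp hcB
  have hq₁₂ : q₁ ≠ q₂ := by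
    intro hcon
    have := Finset.disjoint_left.mp hdisj (by rw [hq₁]; exact mem_singleton_self _)
    rw [hq₂, hcon] at this
    exact this (mem_singleton_self _)
  have hq₁mem : q₁ = q ∨ q₁ = q + 1 := by
    have : q₁ ∈ A ∪ B := by rw [hq₁]; exact mem_union_left _ (mem_singleton_self _)
    rw [hunion] at this
    simpa using this
  have hq₂mem : q₂ = q ∨ q₂ = q + 1 := by
    have : q₂ ∈ A ∪ B := by rw [hq₂]; exact mem_union_right _ (mem_singleton_self _)
    rw [hunion] at this
    simpa using this
  have hstep : q₂ = q₁ + 1 ∨ q₂ = q₁ - 1 := by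
    rcases hq₁mem with h1 | h1 <;> rcases hq₂mem with h2 | h2
    · exact absurd (h1.trans h2.symm) hq₁₂
    · left; rw [h1, h2]
    · right; rw [h1, h2]; ring
    · exact absurd (h1.trans h2.symm) hq₁₂
  -- the moving particle
  have hq₁u : q₁ ∈ u l := by
    have : q₁ ∈ A := by rw [hq₁]; exact mem_singleton_self _
    exact (Finset.mem_sdiff.mp this).1
  rw [htr.2.1 l (by omega)] at hq₁u
  obtain ⟨jm, -, hjm⟩ := Finset.mem_image.mp hq₁u
  have hinj := inj_ut hc hpath htr l (by omega)
  have hnotin : ut l jm ∉ u (l+1) := by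
    rw [hjm]
    intro hcon
    have : q₁ ∈ A := by rw [hq₁]; exact mem_singleton_self _
    exact (Finset.mem_sdiff.mp this).2 hcon
  have hmove : ut (l+1) jm ∈ u (l+1) \ u l := (htr.2.2 l hl jm).2 hnotin
  have hq₂val : ut (l+1) jm = q₂ := by
    have : ut (l+1) jm ∈ B := hmove
    rw [hq₂] at this
    simpa using this
  refine ⟨jm, ?_, ?_, hnotin, ?_, ?_⟩
  · intro j hj
    have hjl : ut l j ∈ u l := ut_mem htr (by omega) j
    have hne : ut l j ≠ q₁ := by
      rw [← hjm]
      exact fun hcon => hj (hinj hcon)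
    have hmem2 : ut l j ∈ u (l+1) := by
      by_contra hcon
      have : ut l j ∈ A := Finset.mem_sdiff.mpr ⟨hjl, hcon⟩
      rw [hq₁] at this
      exact hne (by simpa using this)
    exact (htr.2.2 l hl j).1 hmem2
  · rw [hq₂val, hjm]; exact hstep
  · exact (Finset.mem_sdiff.mp hmove).2
  · rw [hq₂val, hjm]; exact hq₁₂.symm

end PathMachinery

section TravelMachinery

variable {N : ℕ} {c x : Finset (Fin L)} {k : ℕ} {u : ℕ → Finset (Fin L)}
  {ut : ℕ → Fin N → Fin L}

lemma sum_travel (hL : 2 ≤ L) (hc : c.card = N) (hpath : IsPathN L u k c x)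
    (htr : IsTracking L N u k ut) : ∑ j, travel ut k j = k := by
  have hswap : ∑ j, travel ut k j
      = ∑ l ∈ Finset.range k, ∑ j, cycDist (ut l j) (ut (l+1) j) := by
    rw [Finset.sum_comm]
    rfl
  rw [hswap]
  have hone : ∀ l ∈ Finset.range k, ∑ j, cycDist (ut l j) (ut (l+1) j) = 1 := by
    intro l hl
    rw [Finset.mem_range] at hl
    obtain ⟨jm, hother, hpm, -, -, -⟩ := step_lemma hL hc hpath htr l hl
    rw [Finset.sum_eq_single jm]
    · rcases hpm with h | h
      · rw [h]; exact cycDist_add_one _ hL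
      · rw [h]; exact cycDist_sub_one _ hL
    · intro j _ hj
      rw [hother j hj, cycDist_self]
    · intro h
      exact absurd (mem_univ jm) h
  rw [Finset.sum_congr rfl hone, Finset.sum_const, Finset.card_range, smul_eq_mul, mul_one]

lemma seg_ge (j : Fin N) : ∀ a b : ℕ, a ≤ b →
    cycDist (ut a j) (ut b j) ≤ ∑ l ∈ Finset.Ico a b, cycDist (ut l j) (ut (l + 1) j) := by
  intro a b
  induction b with
  | zero =>
    intro hab
    have : a = 0 := by omega
    subst this
    simp [cycDist_self]
  | succ b ih =>
    intro hab
    rcases Nat.lt_or_ge a (b+1) with h | h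
    · have hab' : a ≤ b := by omega
      have h1 := ih hab'
      have h2 : cycDist (ut a j) (ut (b+1) j)
          ≤ cycDist (ut a j) (ut b j) + cycDist (ut b j) (ut (b+1) j) :=
        cycDist_triangle _ _ _
      rw [Finset.sum_Ico_succ_top hab']
      omega
    · have : a = b + 1 := by omega
      subst this
      simp [cycDist_self]

/-- The fundamental consequence of geodesy: each particle moves along a geodesic,
    in the strong "taut at every time" sense. -/
lemma taut (hL : 2 ≤ L) (hc : c.card = N) (hcx : x.card = N) (hNL : N < L)
    (hk : k = dN L c x) (hpath : IsPathN L u k c x) (htr : IsTracking L N u k ut) :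
    ∀ j : Fin N, ∀ t ≤ k,
      (∑ l ∈ Finset.range t, cycDist (ut l j) (ut (l + 1) j))
        = cycDist (ut 0 j) (ut t j) := by
  have hinj0 : Function.Injective (ut 0) := inj_ut hc hpath htr 0 (by omega)
  have hinjk : Function.Injective (ut k) := inj_ut hc hpath htr k (le_refl _)
  have him0 : image (ut 0) univ = c := by rw [← htr.2.1 0 (by omega), hpath.1]
  have himk : image (ut k) univ = x := by rw [← htr.2.1 k (le_refl _), hpath.2.1]
  -- upper bound on distance
  obtain ⟨w, hw⟩ := exists_walk_le hNL _ (ut 0) (ut k) hinj0 hinjk (le_refl _)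
  have hup : k ≤ ∑ j, cycDist (ut 0 j) (ut k j) := by
    have h1 : (hcGraph L).dist c x ≤ w.length := by
      rw [← him0, ← himk]
      exact SimpleGraph.dist_le w
    have hk' : k = (hcGraph L).dist c x := hk
    omega
  -- lower bound, per particle
  have hlow : ∀ j : Fin N, cycDist (ut 0 j) (ut k j) ≤ travel ut k j := by
    intro j
    have := seg_ge (ut := ut) j 0 k (by omega)
    rwa [← Finset.range_eq_Ico] at this
  have htot : ∑ j, travel ut k j = k := sum_travel hL hc hpath htr
  have hsum_eq : ∑ j, cycDist (ut 0 j) (ut k j) = ∑ j, travel ut k j := by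
    have h1 : ∑ j, cycDist (ut 0 j) (ut k j) ≤ ∑ j, travel ut k j :=
      Finset.sum_le_sum fun j _ => hlow j
    omega
  have heach : ∀ j : Fin N, travel ut k j = cycDist (ut 0 j) (ut k j) := by
    intro j
    have := (Finset.sum_eq_sum_iff_of_le fun i (_ : i ∈ univ) => hlow i).mp hsum_eq
    exact (this j (mem_univ j)).symm
  intro j t ht
  have hsplit : (∑ l ∈ Finset.range t, cycDist (ut l j) (ut (l + 1) j))
      + (∑ l ∈ Finset.Ico t k, cycDist (ut l j) (ut (l + 1) j)) = travel ut k j := by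
    have htrv : travel ut k j = ∑ l ∈ Finset.range k, cycDist (ut l j) (ut (l + 1) j) := rfl
    rw [htrv, Finset.range_eq_Ico, Finset.range_eq_Ico]
    exact Finset.sum_Ico_consecutive (fun l => cycDist (ut l j) (ut (l + 1) j)) (Nat.zero_le t) ht
  have h1 : cycDist (ut 0 j) (ut t j)
      ≤ ∑ l ∈ Finset.range t, cycDist (ut l j) (ut (l + 1) j) := by
    have := seg_ge (ut := ut) j 0 t (by omega)
    rwa [← Finset.range_eq_Ico] at this
  have h2 : cycDist (ut t j) (ut k j)
      ≤ ∑ l ∈ Finset.Ico t k, cycDist (ut l j) (ut (l + 1) j) := seg_ge j t k ht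
  have h3 : cycDist (ut 0 j) (ut k j)
      ≤ cycDist (ut 0 j) (ut t j) + cycDist (ut t j) (ut k j) := cycDist_triangle _ _ _
  have h4 := heach j
  omega

end TravelMachinery

section FirstMove

variable {N : ℕ} {c x : Finset (Fin L)} {k : ℕ} {u : ℕ → Finset (Fin L)}
  {ut : ℕ → Fin N → Fin L}

lemma no_move_const (j : Fin N) (hmv : travel ut k j = 0) :
    ∀ t ≤ k, ut t j = ut 0 j := by
  have hsteps : ∀ l ∈ Finset.range k, cycDist (ut l j) (ut (l+1) j) = 0 :=
    (Finset.sum_eq_zero_iff).mp hmv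
  intro t
  induction t with
  | zero => intro _; rfl
  | succ t ih =>
    intro ht
    have h1 : ut (t+1) j = ut t j := by
      have := hsteps t (Finset.mem_range.mpr (by omega))
      exact (cycDist_eq_zero this).symm
    rw [h1]
    exact ih (by omega)

lemma exists_move (j : Fin N) (hmv : travel ut k j ≠ 0) :
    ∃ l, l < k ∧ ut (l+1) j ≠ ut l j := by
  by_contra hall
  push_neg at hall
  apply hmv
  refine Finset.sum_eq_zero fun l hl => ?_
  rw [Finset.mem_range] at hl
  rw [hall l hl, cycDist_self]

/-- The first move of a moving particle along a geodesic determines whether it is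
in `I_-` or `I_+`. -/
lemma first_move (hL : 3 ≤ L) (hc : c.card = N) (hcx : x.card = N) (hNL : N < L)
    (hk : k = dN L c x) (hpath : IsPathN L u k c x) (htr : IsTracking L N u k ut)
    (j : Fin N) (hmv : travel ut k j ≠ 0) :
    ∃ T, T < k ∧ (∀ t, t ≤ T → ut t j = ut 0 j) ∧
      (ut (T+1) j = ut 0 j + 1 ∨ ut (T+1) j = ut 0 j - 1) ∧
      ut (T+1) j ∉ u T ∧
      (Iminus ut k j ↔ ut (T+1) j = ut 0 j - 1) ∧
      (Iplus ut k j ↔ ut (T+1) j = ut 0 j + 1) := by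
  have hL2 : 2 ≤ L := by omega
  have htaut := taut hL2 hc hcx hNL hk hpath htr j
  obtain ⟨T, hTk, hTmove⟩ :
      ∃ T, (T < k ∧ ut (T+1) j ≠ ut T j) ∧ ∀ l < T, ¬(l < k ∧ ut (l+1) j ≠ ut l j) := by
    have hexm := exists_move j hmv
    exact ⟨Nat.find hexm, Nat.find_spec hexm, fun l hl => Nat.find_min hexm hl⟩
  obtain ⟨hTk, hTne⟩ := hTk
  have hconst : ∀ t, t ≤ T → ut t j = ut 0 j := by
    intro t
    induction t with
    | zero => intro _; rfl
    | succ t ih =>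
      intro ht
      have h1 : ¬(t < k ∧ ut (t+1) j ≠ ut t j) := hTmove t (by omega)
      push_neg at h1
      rw [h1 (by omega)]
      exact ih (by omega)
  -- identify the mover at step T
  obtain ⟨jm, hother, hpm, -, hnotin2, -⟩ := step_lemma hL2 hc hpath htr T hTk
  have hjjm : j = jm := by
    by_contra hne
    exact hTne (hother j hne)
  subst hjjm
  have hT0 : ut T j = ut 0 j := hconst T (le_refl _)
  rw [hT0] at hpm
  -- the "taut visit" argument
  have hvisit : ∀ v, (∃ l ≤ k, ut l j = v) → cycDist (ut 0 j) v = 1 → ut (T+1) j = v := by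
    rintro v ⟨l, hlk, hlv⟩ hv1
    have hsum1 : (∑ r ∈ Finset.range l, cycDist (ut r j) (ut (r + 1) j)) = 1 := by
      rw [htaut l hlk, hlv, hv1]
    have hTl : T < l := by
      by_contra hcon
      push_neg at hcon
      have : ut l j = ut 0 j := hconst l hcon
      rw [this] at hlv
      rw [← hlv] at hv1
      rw [cycDist_self] at hv1
      omega
    have hdT : cycDist (ut T j) (ut (T+1) j) ≠ 0 := by
      intro hcon
      exact hTne (cycDist_eq_zero hcon).symm
    have hTmem : T ∈ Finset.range l := Finset.mem_range.mpr hTl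
    have herase : ∑ r ∈ (Finset.range l).erase T, cycDist (ut r j) (ut (r + 1) j) = 0 := by
      have hsplit : cycDist (ut T j) (ut (T+1) j)
          + ∑ r ∈ (Finset.range l).erase T, cycDist (ut r j) (ut (r + 1) j)
          = ∑ r ∈ Finset.range l, cycDist (ut r j) (ut (r + 1) j) :=
        Finset.add_sum_erase (Finset.range l)
          (fun r => cycDist (ut r j) (ut (r + 1) j)) hTmem
      omega
    have hother0 : ∀ r, r < l → r ≠ T → ut (r+1) j = ut r j := by
      intro r hrl hrT
      have hmem : r ∈ (Finset.range l).erase T := by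
        simp [Finset.mem_erase, hrT, Finset.mem_range, hrl]
      have := (Finset.sum_eq_zero_iff).mp herase r hmem
      exact (cycDist_eq_zero this).symm
    have hconst2 : ∀ r, T + 1 ≤ r → r ≤ l → ut r j = ut (T+1) j := by
      intro r hr1 hr2
      induction r with
      | zero => omega
      | succ r ih =>
        rcases Nat.lt_or_ge T r with h | h
        · have h1 : ut (r+1) j = ut r j := hother0 r (by omega) (by omega)
          rw [h1]
          exact ih (by omega) (by omega)
        · have : T = r := by omega
          rw [this]
    rw [← hlv]
    exact (hconst2 l (by omega) (by omega)).symm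
  have hc1 : ((1:ℕ) : Fin L) = (1 : Fin L) := Nat.cast_one
  refine ⟨T, hTk, hconst, hpm, hnotin2, ?_, ?_⟩
  · constructor
    · rintro ⟨-, l, hlk, hlv⟩
      rw [hc1] at hlv
      exact hvisit _ ⟨l, hlk, hlv⟩ (cycDist_sub_one _ hL2)
    · intro hfd
      exact ⟨hmv, T+1, by omega, by rw [hc1]; exact hfd⟩
  · constructor
    · rintro ⟨-, l, hlk, hlv⟩
      rw [hc1] at hlv
      exact hvisit _ ⟨l, hlk, hlv⟩ (cycDist_add_one _ hL2)
    · intro hfd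
      exact ⟨hmv, T+1, by omega, by rw [hc1]; exact hfd⟩

lemma not_Iminus_and_Iplus (hL : 3 ≤ L) (hc : c.card = N) (hcx : x.card = N) (hNL : N < L)
    (hk : k = dN L c x) (hpath : IsPathN L u k c x) (htr : IsTracking L N u k ut)
    (j : Fin N) : ¬(Iminus ut k j ∧ Iplus ut k j) := by
  rintro ⟨hm, hp⟩
  obtain ⟨T, -, -, -, -, hiffm, hiffp⟩ := first_move hL hc hcx hNL hk hpath htr j hm.1
  have h1 := hiffm.mp hm
  have h2 := hiffp.mp hp
  exact sub_add_one_ne (ut 0 j) hL (h2.symm.trans h1)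

lemma prop_down (hL : 3 ≤ L) (hc : c.card = N) (hcx : x.card = N) (hNL : N < L)
    (hk : k = dN L c x) (hpath : IsPathN L u k c x) (htr : IsTracking L N u k ut)
    (i j : Fin N) (hadjs : ut 0 i = ut 0 j + 1) (hmi : Iminus ut k i) :
    Iminus ut k j := by
  obtain ⟨Ti, hTik, hconsti, -, hnotini, hiffmi, -⟩ :=
    first_move hL hc hcx hNL hk hpath htr i hmi.1
  have hFDi : ut (Ti+1) i = ut 0 j := by
    rw [hiffmi.mp hmi, hadjs]; ring
  rw [hFDi] at hnotini
  -- particle j must move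
  have hmvj : travel ut k j ≠ 0 := by
    intro hcon
    have h1 : ut Ti j = ut 0 j := no_move_const j hcon Ti (by omega)
    exact hnotini (h1 ▸ ut_mem htr (by omega) j)
  obtain ⟨Tj, hTjk, hconstj, hpmj, hnotinj, hiffmj, hiffpj⟩ :=
    first_move hL hc hcx hNL hk hpath htr j hmvj
  have hTji : Tj < Ti := by
    by_contra hcon
    push_neg at hcon
    have h1 : ut Ti j = ut 0 j := hconstj Ti hcon
    exact hnotini (h1 ▸ ut_mem htr (by omega) j)
  apply hiffmj.mpr
  rcases hpmj with hplus | hminus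
  · exfalso
    have h1 : ut (Tj+1) j = ut 0 i := by rw [hplus, hadjs]
    rw [h1] at hnotinj
    have h2 : ut Tj i = ut 0 i := hconsti Tj (by omega)
    exact hnotinj (h2 ▸ ut_mem htr (by omega) i)
  · exact hminus

lemma prop_up (hL : 3 ≤ L) (hc : c.card = N) (hcx : x.card = N) (hNL : N < L)
    (hk : k = dN L c x) (hpath : IsPathN L u k c x) (htr : IsTracking L N u k ut)
    (i j : Fin N) (hadjs : ut 0 i = ut 0 j + 1) (hpj : Iplus ut k j) :
    Iplus ut k i := by
  obtain ⟨Tj, hTjk, hconstj, -, hnotinj, -, hiffpj⟩ :=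
    first_move hL hc hcx hNL hk hpath htr j hpj.1
  have hFDj : ut (Tj+1) j = ut 0 i := by
    rw [hiffpj.mp hpj, hadjs]
  rw [hFDj] at hnotinj
  have hmvi : travel ut k i ≠ 0 := by
    intro hcon
    have h1 : ut Tj i = ut 0 i := no_move_const i hcon Tj (by omega)
    exact hnotinj (h1 ▸ ut_mem htr (by omega) i)
  obtain ⟨Ti, hTik, hconsti, hpmi, hnotini, hiffmi, hiffpi⟩ :=
    first_move hL hc hcx hNL hk hpath htr i hmvi
  have hTij : Ti < Tj := by
    by_contra hcon
    push_neg at hcon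
    have h1 : ut Tj i = ut 0 i := hconsti Tj hcon
    exact hnotinj (h1 ▸ ut_mem htr (by omega) i)
  apply hiffpi.mpr
  rcases hpmi with hplus | hminus
  · exact hplus
  · exfalso
    have h1 : ut (Ti+1) i = ut 0 j := by rw [hminus, hadjs]; ring
    rw [h1] at hnotini
    have h2 : ut Ti j = ut 0 j := hconstj Ti (by omega)
    exact hnotini (h2 ▸ ut_mem htr (by omega) j)

end FirstMove

section Droplet

variable {N : ℕ} {c : Finset (Fin L)}

lemma sorted_droplet (hN : N < L) (hc : c.card = N) (hdrop : isDroplet L N c)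
    (he : ¬ ({(0 : Fin L), ((L - 1 : ℕ) : Fin L)} : Finset (Fin L)) ⊆ c)
    {g : Fin N → Fin L} (hmono : StrictMono g) (himg : image g univ = c) :
    ∃ b : Fin L, b.val + N ≤ L ∧ ∀ j : Fin N, g j = b + ((j.val : ℕ) : Fin L) := by
  obtain ⟨m, hm⟩ := hdrop
  set b := m - (((N - 1) / 2 : ℕ) : Fin L) with hbdef
  have hmem : ∀ z : Fin L, z ∈ c ↔ ∃ i : ℕ, i < N ∧ b + ((i : ℕ) : Fin L) = z := by
    intro z
    rw [hm]
    unfold droplet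
    simp
    constructor
    · rintro ⟨a, haN, ha⟩
      refine ⟨a, haN, ?_⟩
      rw [hbdef, ha]
      ring
    · rintro ⟨i, hiN, hi⟩
      refine ⟨i, hiN, ?_⟩
      rw [← hi, hbdef]
      ring
  have hbL := b.isLt
  have hb : b.val + N ≤ L := by
    by_contra hcon
    push_neg at hcon
    have hb0 : b.val ≠ 0 := by intro h; omega
    have mem0 : (0 : Fin L) ∈ c := by
      refine (hmem 0).mpr ⟨L - b.val, by omega, ?_⟩
      refine Fin.ext ?_
      rw [fin_add_val, fin_natCast_val _ (by omega)]
      simp only [Fin.val_zero]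
      split_ifs <;> omega
    have memL : ((L - 1 : ℕ) : Fin L) ∈ c := by
      refine (hmem _).mpr ⟨L - 1 - b.val, by omega, ?_⟩
      refine Fin.ext ?_
      rw [fin_add_val, fin_natCast_val _ (by omega), fin_natCast_val _ (by omega)]
      split_ifs <;> omega
    apply he
    rw [Finset.insert_subset_iff]
    exact ⟨mem0, Finset.singleton_subset_iff.mpr memL⟩
  refine ⟨b, hb, ?_⟩
  set g' : Fin N → Fin L := fun j => b + ((j.val : ℕ) : Fin L) with hg'def
  have hg'val : ∀ j : Fin N, (g' j).val = b.val + j.val := by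
    intro j
    have hj := j.isLt
    rw [hg'def]
    simp only
    rw [fin_add_val, fin_natCast_val _ (by omega)]
    split_ifs <;> omega
  have hg'mono : StrictMono g' := by
    intro a a' haa'
    rw [Fin.lt_def, hg'val, hg'val]
    rw [Fin.lt_def] at haa'
    omega
  have himg' : image g' univ = c := by
    ext z
    rw [hmem z]
    simp only [Finset.mem_image, mem_univ, true_and]
    constructor
    · rintro ⟨j, hj⟩
      exact ⟨j.val, j.isLt, hj⟩
    · rintro ⟨i, hiN, hz⟩
      exact ⟨⟨i, hiN⟩, hz⟩
  have hcard : c.card = N := hc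
  have h1 : g = c.orderEmbOfFin hcard := by
    refine Finset.orderEmbOfFin_unique hcard ?_ hmono
    intro j
    rw [← himg]
    exact mem_image_of_mem g (mem_univ j)
  have h2 : g' = c.orderEmbOfFin hcard := by
    refine Finset.orderEmbOfFin_unique hcard ?_ hg'mono
    intro j
    rw [← himg']
    exact mem_image_of_mem g' (mem_univ j)
  intro j
  rw [h1]
  exact (congrFun h2 j).symm

end Droplet


end Aux

/-- Hard-core particle property (iii): along a shortest path from a droplet avoiding the edge
`{0, L-1}`, every counter-clockwise moving particle precedes every particle that does not move
counter-clockwise, i.e. `sup I_- ≤ inf (I_0 ∪ I_+)` and `sup (I_- ∪ I_0) ≤ inf I_+`. -/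
theorem direction_sets_ordered (L N : ℕ) [NeZero L] (hN : N < L)
    (c x : Finset (Fin L)) (hc : c.card = N) (hx : x.card = N)
    (hdrop : isDroplet L N c)
    (he : ¬ ({(0 : Fin L), ((L - 1 : ℕ) : Fin L)} : Finset (Fin L)) ⊆ c)
    (k : ℕ) (hk : k = dN L c x)
    (u : ℕ → Finset (Fin L)) (hpath : IsPathN L u k c x)
    (ut : ℕ → Fin N → Fin L) (htr : IsTracking L N u k ut) :
    (∀ i j : Fin N, Iminus ut k i → (I0 ut k j ∨ Iplus ut k j) → i ≤ j) ∧
    (∀ i j : Fin N, (Iminus ut k i ∨ I0 ut k i) → Iplus ut k j → i ≤ j) := by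
  rcases Nat.lt_or_ge N 2 with hN2 | hN2
  · constructor <;> intro i j _ _ <;>
      · have hi := i.isLt
        have hj := j.isLt
        exact Fin.le_def.mpr (by omega)
  · have hL3 : 3 ≤ L := by omega
    have him0 : image (ut 0) univ = c := by rw [← htr.2.1 0 (Nat.zero_le k), hpath.1]
    obtain ⟨b, hb, hs⟩ := sorted_droplet hN hc hdrop he htr.1 him0
    have hadjs : ∀ (j j' : Fin N), j.val + 1 = j'.val → ut 0 j' = ut 0 j + 1 := by
      intro j j' h
      rw [hs, hs]
      have hcast : ((j'.val : ℕ) : Fin L) = ((j.val : ℕ) : Fin L) + 1 := by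
        rw [← h]
        push_cast
        ring
      rw [hcast]
      abel
    have down : ∀ (d : ℕ) (i j : Fin N), j.val + d = i.val →
        Iminus ut k i → Iminus ut k j := by
      intro d
      induction d with
      | zero =>
        intro i j h hi
        have : j = i := Fin.ext (by omega)
        rwa [this]
      | succ d ih =>
        intro i j h hi
        have hj1 : j.val + 1 < N := by have := i.isLt; omega
        set j' : Fin N := ⟨j.val + 1, hj1⟩ with hj'def
        have hIj' : Iminus ut k j' := ih i j' (by show j.val + 1 + d = i.val; omega) hi
        exact prop_down hL3 hc hx hN hk hpath htr j' j (hadjs j j' rfl) hIj'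
    have up : ∀ (d : ℕ) (i j : Fin N), j.val + d = i.val →
        Iplus ut k j → Iplus ut k i := by
      intro d
      induction d with
      | zero =>
        intro i j h hj
        have : j = i := Fin.ext (by omega)
        rwa [← this]
      | succ d ih =>
        intro i j h hj
        have hj1 : j.val + 1 < N := by have := i.isLt; omega
        set j' : Fin N := ⟨j.val + 1, hj1⟩ with hj'def
        have hIj' : Iplus ut k j' := prop_up hL3 hc hx hN hk hpath htr j' j (hadjs j j' rfl) hj
        exact ih i j' (by show j.val + 1 + d = i.val; omega) hIj'
    constructor
    · intro i j hmi hj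
      by_contra hij
      have hij' : j < i := not_le.mp hij
      rw [Fin.lt_def] at hij'
      have hmj : Iminus ut k j := down (i.val - j.val) i j (by omega) hmi
      rcases hj with h0 | hp
      · exact hmj.1 h0
      · exact not_Iminus_and_Iplus hL3 hc hx hN hk hpath htr j ⟨hmj, hp⟩
    · intro i j hi hpj
      by_contra hij
      have hij' : j < i := not_le.mp hij
      rw [Fin.lt_def] at hij'
      have hpi : Iplus ut k i := up (i.val - j.val) i j (by omega) hpj
      rcases hi with hm | h0
      · exact not_Iminus_and_Iplus hL3 hc hx hN hk hpath htr i ⟨hm, hpi⟩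
      · exact hpi.1 h0
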